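/- Let f be a Markov interval map and x ∈ E_f. Then for every i ∈ {1,…,n}: T_i* T_i = Σ_{j=1}^n a_{ij} T_j T_j* + â_{i,ι(x)} P_{e(x)}, where P_{e(x)} is the orthogonal projection onto ℂ δ_{e(x)}. -/

import Mathlib

open scoped Classical ENNReal

noncomputable section

/-- Partition and branch data for a Markov interval map with `n` Markov
subintervals.  `cm j` is the point `c_j⁻` and `cp j` is `c_j⁺` (with
`cm 0 = cp 0 = c₀` and `cm n = cp n = c_n`).  `f` is the globally defined map,
`F j` is the branch of `f` on the `j`-th Markov interval (indexed by
`j = 0, …, n-1`, corresponding to the interval `I_{j+1}` of the paper) and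
`F' j` is the derivative of that branch. -/
structure MarkovSystem (n : ℕ) where
  cm : ℕ → ℝ
  cp : ℕ → ℝ
  f : ℝ → ℝ
  F : ℕ → ℝ → ℝ
  F' : ℕ → ℝ → ℝ
  two_le : 2 ≤ n
  cm_zero : cm 0 = cp 0
  cm_n : cm n = cp n
  cm_le_cp : ∀ j ≤ n, cm j ≤ cp j
  cp_lt_cm : ∀ j < n, cp j < cm (j + 1)

namespace MarkovSystem

variable {n : ℕ} (M : MarkovSystem n)

/-- The Markov interval `I_{j+1} = [c_j⁺, c_{j+1}⁻]` (for `j < n`). -/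
def Ipart (j : ℕ) : Set ℝ := Set.Icc (M.cp j) (M.cm (j + 1))

/-- The escape interval `E_j = (c_j⁻, c_j⁺)` (for `1 ≤ j ≤ n-1`). -/
def Epart (j : ℕ) : Set ℝ := Set.Ioo (M.cm j) (M.cp j)

/-- The ambient interval `I = [c₀, c_n]`. -/
def itv : Set ℝ := Set.Icc (M.cm 0) (M.cm n)

/-- The domain of `f`, namely `⋃_{j=1}^n I_j`. -/
def dom : Set ℝ := ⋃ j ∈ Finset.range n, M.Ipart j

/-- The set `Γ` of partition boundary points. -/
def Gamma : Set ℝ := {y | ∃ j ≤ n, y = M.cm j ∨ y = M.cp j}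

/-- `q`-fold image of a set under `f`, applying `f` only where it is defined. -/
def iterImage : ℕ → Set ℝ → Set ℝ
  | 0, S => S
  | q + 1, S => M.f '' (iterImage q S ∩ M.dom)

/-- `f^k(x)` is defined, i.e. all earlier iterates lie in the domain. -/
def definedUpTo (k : ℕ) (x : ℝ) : Prop := ∀ l < k, M.f^[l] x ∈ M.dom

/-- The orbit equivalence relation `R_f`. -/
def Rrel (x y : ℝ) : Prop :=
  ∃ p q : ℕ, M.definedUpTo p x ∧ M.definedUpTo q y ∧ M.f^[p] x = M.f^[q] y

/-- The generalized orbit `R_f(x)` of a point `x ∈ I`. -/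
def Rclass (x : ℝ) : Set ℝ := {y | y ∈ M.itv ∧ M.Rrel x y}

/-- The maximal invariant set `Ω_f`. -/
def Omega : Set ℝ := {x | x ∈ M.itv ∧ ∀ k, M.f^[k] x ∈ M.dom}

/-- The escape set `E_f = I \ Ω_f`. -/
def Esc : Set ℝ := M.itv \ M.Omega

/-- The regular set `Λ_f = Ω_f \ R_f(Γ)`. -/
def Lambda : Set ℝ := {x | x ∈ M.Omega ∧ ∀ γ ∈ M.Gamma, ¬ M.Rrel x γ}

/-- The escape time of a point of the escape set. -/
def tau (x : ℝ) : ℕ := sInf {k | M.f^[k] x ∉ M.dom}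

/-- The final escape point `e(x) = f^{τ(x)}(x)`. -/
def e (x : ℝ) : ℝ := M.f^[M.tau x] x

/-- The transition-matrix condition `a_{ij} = 1`, i.e. `f(int I_i) ⊇ int I_j`. -/
def trans (i j : ℕ) : Prop := interior (M.Ipart j) ⊆ M.F i '' interior (M.Ipart i)

/-- The escape-transition condition `â_{ik} = 1`, i.e. `int I_i ∩ f⁻¹(E_k) ≠ ∅`. -/
def ahat (i k : ℕ) : Prop := (interior (M.Ipart i) ∩ M.F i ⁻¹' M.Epart k).Nonempty

end MarkovSystem

/-- The defining properties (P1)-(P4) of a Markov interval map, together with the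
compatibility of the global map `f` with the branches `F j`:  `f` agrees with `F j`
on `I_j` except possibly at a boundary point shared with an adjacent interval,
where `f` is given by one of the two adjacent branches. -/
structure IsMarkov {n : ℕ} (M : MarkovSystem n) : Prop where
  compat₁ : ∀ j < n, ∀ x ∈ M.Ipart j, (∀ k < n, k ≠ j → x ∉ M.Ipart k) → M.f x = M.F j x
  compat₂ : ∀ x ∈ M.dom, ∃ j, j < n ∧ x ∈ M.Ipart j ∧ M.f x = M.F j x
  maps_into : ∀ j < n, M.F j '' M.Ipart j ⊆ M.itv
  onto : M.itv ⊆ ⋃ j ∈ Finset.range n, M.F j '' M.Ipart j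
  markov : ∀ i < n, ∃ S T : Set ℕ, S ⊆ {j | j < n} ∧ T ⊆ {j | 1 ≤ j ∧ j < n} ∧
    M.F i '' M.Ipart i = (⋃ j ∈ S, M.Ipart j) ∪ (⋃ j ∈ T, M.Epart j)
  deriv : ∀ i < n, ∀ x ∈ M.Ipart i, HasDerivWithinAt (M.F i) (M.F' i x) (M.Ipart i) x
  derivCont : ∀ i < n, ContinuousOn (M.F' i) (M.Ipart i)
  mono : ∀ i < n, StrictMonoOn (M.F i) (M.Ipart i) ∨ StrictAntiOn (M.F i) (M.Ipart i)
  expansive : ∃ b > 1, ∀ i < n, ∀ x ∈ M.Ipart i, b < |M.F' i x|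
  aperiodic : ∀ i < n, ∃ q, M.dom ⊆ M.iterImage q (M.Ipart i)

namespace MarkovSystem

variable {n : ℕ} (M : MarkovSystem n)

/-- The Hilbert space `H_x = ℓ²(R_f(x))`. -/
abbrev Hsp (x : ℝ) : Type _ := lp (fun _ : M.Rclass x => ℂ) 2

/-- The canonical orthonormal basis vector `δ_z` of `H_x`, for `z ∈ R_f(x)`. -/
def dvec {x : ℝ} (z : M.Rclass x) : M.Hsp x := lp.single 2 z 1

/-- `T` is the bounded operator `T_i` on `H_x`, determined on the basis by
`T_i δ_y = δ_{(f|_{I_i})⁻¹(y)}` if `y ∈ f(I_i)` and `T_i δ_y = 0` otherwise. -/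
def IsBranchOp (x : ℝ) (i : ℕ) (T : M.Hsp x →L[ℂ] M.Hsp x) : Prop :=
  (∀ z w : M.Rclass x, (w : ℝ) ∈ M.Ipart i → M.F i w = (z : ℝ) →
      T (M.dvec z) = M.dvec w) ∧
  (∀ z : M.Rclass x, (z : ℝ) ∉ M.F i '' M.Ipart i → T (M.dvec z) = 0)

/-- `Pe` is the rank-one orthogonal projection onto `ℂ δ_{e(x)}`. -/
def IsEscProj (x : ℝ) (Pe : M.Hsp x →L[ℂ] M.Hsp x) : Prop :=
  ∀ z : M.Rclass x, Pe (M.dvec z) = if (z : ℝ) = M.e x then M.dvec z else 0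

end MarkovSystem
namespace MarkovSystem

variable {n : ℕ} (M : MarkovSystem n)

/-! ### Order lemmas -/

lemma cp_lt_cm_of_lt : ∀ {k j : ℕ}, j < k → k ≤ n → M.cp j < M.cm k := by
  intro k
  induction k with
  | zero => intro j hj _; exact absurd hj (Nat.not_lt_zero j)
  | succ m ih =>
    intro j hj hk
    rcases Nat.lt_succ_iff_lt_or_eq.mp hj with h | h
    · exact lt_trans (lt_of_lt_of_le (ih h (by omega)) (M.cm_le_cp m (by omega)))
        (M.cp_lt_cm m (by omega))
    · subst h; exact M.cp_lt_cm j (by omega)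

lemma cm_le_cm {j k : ℕ} (h : j ≤ k) (hk : k ≤ n) : M.cm j ≤ M.cm k := by
  rcases eq_or_lt_of_le h with rfl | hlt
  · exact le_rfl
  · exact (M.cm_le_cp j (by omega)).trans (M.cp_lt_cm_of_lt hlt hk).le

lemma cp_le_cp {j k : ℕ} (h : j ≤ k) (hk : k ≤ n) : M.cp j ≤ M.cp k := by
  rcases eq_or_lt_of_le h with rfl | hlt
  · exact le_rfl
  · exact (M.cp_lt_cm_of_lt hlt hk).le.trans (M.cm_le_cp k hk)

lemma Ipart_subset_itv {j : ℕ} (hj : j < n) : M.Ipart j ⊆ M.itv := by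
  intro z hz
  obtain ⟨h1, h2⟩ := hz
  refine Set.mem_Icc.mpr ⟨?_, ?_⟩
  · calc M.cm 0 = M.cp 0 := M.cm_zero
      _ ≤ M.cp j := M.cp_le_cp (Nat.zero_le j) (by omega)
      _ ≤ z := h1
  · exact h2.trans (M.cm_le_cm (by omega) le_rfl)

lemma Ipart_left_mem {j : ℕ} (hj : j < n) : M.cp j ∈ M.Ipart j :=
  Set.mem_Icc.mpr ⟨le_rfl, (M.cp_lt_cm j hj).le⟩

lemma Ipart_right_mem {j : ℕ} (hj : j < n) : M.cm (j + 1) ∈ M.Ipart j :=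
  Set.mem_Icc.mpr ⟨(M.cp_lt_cm j hj).le, le_rfl⟩

lemma cm_mem_Gamma {j : ℕ} (h : j ≤ n) : M.cm j ∈ M.Gamma := ⟨j, h, Or.inl rfl⟩

lemma cp_mem_Gamma {j : ℕ} (h : j ≤ n) : M.cp j ∈ M.Gamma := ⟨j, h, Or.inr rfl⟩

lemma interior_Ipart {j : ℕ} : interior (M.Ipart j) = Set.Ioo (M.cp j) (M.cm (j + 1)) := by
  rw [show M.Ipart j = Set.Icc (M.cp j) (M.cm (j + 1)) from rfl, interior_Icc]

lemma eq_endpoint_of_mem_Gamma {j : ℕ} {z : ℝ} (hj : j < n) (hz : z ∈ M.Ipart j)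
    (hg : z ∈ M.Gamma) : z = M.cp j ∨ z = M.cm (j + 1) := by
  obtain ⟨h1, h2⟩ := hz
  obtain ⟨k, hk, hc | hc⟩ := hg
  · subst hc
    rcases le_or_gt k j with hkj | hkj
    · left
      exact le_antisymm ((M.cm_le_cp k hk).trans (M.cp_le_cp hkj (by omega))) h1
    · right
      exact le_antisymm h2 (M.cm_le_cm (by omega) hk)
  · subst hc
    rcases le_or_gt k j with hkj | hkj
    · left; exact le_antisymm (M.cp_le_cp hkj (by omega)) h1
    · right
      exact le_antisymm h2 ((M.cm_le_cm (by omega) hk).trans (M.cm_le_cp k hk))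

lemma mem_Gamma_of_mem_two {j k : ℕ} {z : ℝ} (hj : j < n) (hk : k < n) (hne : j ≠ k)
    (h1 : z ∈ M.Ipart j) (h2 : z ∈ M.Ipart k) : z ∈ M.Gamma := by
  rcases Nat.lt_or_ge j k with h | h
  · have hz1 : z ≤ M.cm (j + 1) := h1.2
    have hz2 : M.cp k ≤ z := h2.1
    have h3 : M.cm (j + 1) ≤ M.cp k :=
      (M.cm_le_cm (by omega) (by omega)).trans (M.cm_le_cp k (by omega))
    have : z = M.cm (j + 1) := le_antisymm hz1 (by linarith)
    rw [this]; exact M.cm_mem_Gamma (by omega)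
  · have hne' : k < j := by omega
    have hz1 : z ≤ M.cm (k + 1) := h2.2
    have hz2 : M.cp j ≤ z := h1.1
    have h3 : M.cm (k + 1) ≤ M.cp j :=
      (M.cm_le_cm (by omega) (by omega)).trans (M.cm_le_cp j (by omega))
    have : z = M.cm (k + 1) := le_antisymm hz1 (by linarith)
    rw [this]; exact M.cm_mem_Gamma (by omega)

lemma Ipart_Epart_disj {j k : ℕ} {z : ℝ} (hj : j < n) (hk1 : 1 ≤ k) (hkn : k < n)
    (hz : z ∈ M.Ipart j) (hze : z ∈ M.Epart k) : False := by
  obtain ⟨he1, he2⟩ := hze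
  obtain ⟨h1, h2⟩ := hz
  rcases le_or_gt k j with hkj | hkj
  · have : M.cp k ≤ M.cp j := M.cp_le_cp hkj (by omega)
    linarith
  · have : M.cm (j + 1) ≤ M.cm k := M.cm_le_cm (by omega) (by omega)
    linarith

lemma Epart_eq {j k : ℕ} {z : ℝ} (hk1 : 1 ≤ k) (hkn : k < n) (hj1 : 1 ≤ j) (hjn : j < n)
    (hz : z ∈ M.Epart k) (hz' : z ∈ M.Epart j) : k = j := by
  by_contra hne
  obtain ⟨ha1, ha2⟩ := hz
  obtain ⟨hb1, hb2⟩ := hz'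
  rcases lt_or_gt_of_ne hne with h | h
  · have : M.cp k < M.cm j := M.cp_lt_cm_of_lt h (by omega)
    linarith
  · have : M.cp j < M.cm k := M.cp_lt_cm_of_lt h (by omega)
    linarith

lemma Gamma_Epart_disj {j : ℕ} {z : ℝ} (hj1 : 1 ≤ j) (hjn : j < n)
    (hz : z ∈ M.Epart j) (hg : z ∈ M.Gamma) : False := by
  obtain ⟨he1, he2⟩ := hz
  obtain ⟨k, hk, hc | hc⟩ := hg
  · subst hc
    rcases le_or_gt k j with hkj | hkj
    · have : M.cm k ≤ M.cm j := M.cm_le_cm hkj (by omega)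
      linarith
    · have : M.cp j < M.cm k := M.cp_lt_cm_of_lt hkj hk
      linarith
  · subst hc
    rcases lt_trichotomy k j with hkj | hkj | hkj
    · have : M.cp k < M.cm j := M.cp_lt_cm_of_lt hkj (by omega)
      linarith
    · subst hkj; linarith
    · have h1 : M.cp j < M.cm k := M.cp_lt_cm_of_lt hkj hk
      have h2 : M.cm k ≤ M.cp k := M.cm_le_cp k hk
      linarith

lemma mem_dom {j : ℕ} {z : ℝ} (hj : j < n) (hz : z ∈ M.Ipart j) : z ∈ M.dom :=
  Set.mem_iUnion₂.mpr ⟨j, Finset.mem_range.mpr hj, hz⟩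

lemma exists_of_mem_dom {z : ℝ} (hz : z ∈ M.dom) : ∃ j, j < n ∧ z ∈ M.Ipart j := by
  obtain ⟨j, hj, hzj⟩ := Set.mem_iUnion₂.mp hz
  exact ⟨j, Finset.mem_range.mp hj, hzj⟩

end MarkovSystem
namespace MarkovSystem

variable {n : ℕ} {M : MarkovSystem n}

/-! ### Lemmas depending on the Markov axioms -/

lemma F_injOn (hM : IsMarkov M) {i : ℕ} (hi : i < n) : Set.InjOn (M.F i) (M.Ipart i) :=
  (hM.mono i hi).elim StrictMonoOn.injOn StrictAntiOn.injOn

lemma endpoint_extreme (hM : IsMarkov M) {i : ℕ} (hi : i < n) {u : ℝ}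
    (hu : u = M.cp i ∨ u = M.cm (i + 1)) :
    (∀ t ∈ M.Ipart i, M.F i u ≤ M.F i t) ∨ (∀ t ∈ M.Ipart i, M.F i t ≤ M.F i u) := by
  have hIu : u ∈ M.Ipart i := by
    rcases hu with rfl | rfl
    exacts [M.Ipart_left_mem hi, M.Ipart_right_mem hi]
  rcases hM.mono i hi with hm | hm
  · have hmono := hm.monotoneOn
    rcases hu with rfl | rfl
    · exact Or.inl fun t ht => hmono hIu ht ht.1
    · exact Or.inr fun t ht => hmono ht hIu ht.2
  · have hmono := hm.antitoneOn
    rcases hu with rfl | rfl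
    · exact Or.inr fun t ht => hmono hIu ht ht.1
    · exact Or.inl fun t ht => hmono ht hIu ht.2

lemma extreme_mem_Gamma (hM : IsMarkov M) {i : ℕ} (hi : i < n) {m : ℝ}
    (hmK : m ∈ M.F i '' M.Ipart i)
    (hext : (∀ t ∈ M.F i '' M.Ipart i, m ≤ t) ∨ (∀ t ∈ M.F i '' M.Ipart i, t ≤ m)) :
    m ∈ M.Gamma := by
  obtain ⟨S, T, hS, hT, hdec⟩ := hM.markov i hi
  have hmK' := hmK
  rw [hdec] at hmK'
  rcases hmK' with hmem | hmem
  · obtain ⟨k, hkS, hk⟩ := Set.mem_iUnion₂.mp hmem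
    have hkn : k < n := hS hkS
    rcases hext with hmin | hmax
    · have hcpK : M.cp k ∈ M.F i '' M.Ipart i := by
        rw [hdec]
        exact Set.mem_union_left _ (Set.mem_iUnion₂.mpr ⟨k, hkS, M.Ipart_left_mem hkn⟩)
      have : m = M.cp k := le_antisymm (hmin _ hcpK) hk.1
      rw [this]; exact M.cp_mem_Gamma (by omega)
    · have hcmK : M.cm (k + 1) ∈ M.F i '' M.Ipart i := by
        rw [hdec]
        exact Set.mem_union_left _ (Set.mem_iUnion₂.mpr ⟨k, hkS, M.Ipart_right_mem hkn⟩)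
      have : m = M.cm (k + 1) := le_antisymm hk.2 (hmax _ hcmK)
      rw [this]; exact M.cm_mem_Gamma (by omega)
  · obtain ⟨k, hkT, hk⟩ := Set.mem_iUnion₂.mp hmem
    obtain ⟨hk1, hkn⟩ := hT hkT
    obtain ⟨ha, hb⟩ := hk
    rcases hext with hmin | hmax
    · have hy : (M.cm k + m) / 2 ∈ M.Epart k := ⟨by linarith, by linarith⟩
      have hyK : (M.cm k + m) / 2 ∈ M.F i '' M.Ipart i := by
        rw [hdec]
        exact Set.mem_union_right _ (Set.mem_iUnion₂.mpr ⟨k, hkT, hy⟩)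
      have := hmin _ hyK
      linarith
    · have hy : (m + M.cp k) / 2 ∈ M.Epart k := ⟨by linarith, by linarith⟩
      have hyK : (m + M.cp k) / 2 ∈ M.F i '' M.Ipart i := by
        rw [hdec]
        exact Set.mem_union_right _ (Set.mem_iUnion₂.mpr ⟨k, hkT, hy⟩)
      have := hmax _ hyK
      linarith

lemma endpoint_image_Gamma (hM : IsMarkov M) {i : ℕ} (hi : i < n) {u : ℝ}
    (hu : u = M.cp i ∨ u = M.cm (i + 1)) : M.F i u ∈ M.Gamma := by
  have hIu : u ∈ M.Ipart i := by
    rcases hu with rfl | rfl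
    exacts [M.Ipart_left_mem hi, M.Ipart_right_mem hi]
  refine extreme_mem_Gamma hM hi (Set.mem_image_of_mem _ hIu) ?_
  rcases endpoint_extreme hM hi hu with h | h
  · exact Or.inl (by rintro t ⟨s, hs, rfl⟩; exact h s hs)
  · exact Or.inr (by rintro t ⟨s, hs, rfl⟩; exact h s hs)

lemma Gamma_maps (hM : IsMarkov M) {i : ℕ} (hi : i < n) {z : ℝ} (hzI : z ∈ M.Ipart i)
    (hzG : z ∈ M.Gamma) : M.F i z ∈ M.Gamma :=
  endpoint_image_Gamma hM hi (M.eq_endpoint_of_mem_Gamma hi hzI hzG)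

lemma f_Gamma (hM : IsMarkov M) {z : ℝ} (hz : z ∈ M.Gamma) (hzd : z ∈ M.dom) :
    M.f z ∈ M.Gamma := by
  obtain ⟨j, hj, hzj, hfz⟩ := hM.compat₂ z hzd
  rw [hfz]
  exact Gamma_maps hM hj hzj hz

lemma iter_Gamma (hM : IsMarkov M) {z : ℝ} (hz : z ∈ M.Gamma) {k : ℕ}
    (hdef : M.definedUpTo k z) : M.f^[k] z ∈ M.Gamma := by
  induction k with
  | zero => simpa using hz
  | succ m ih =>
    rw [Function.iterate_succ_apply']
    exact f_Gamma hM (ih fun l hl => hdef l (by omega)) (hdef m (by omega))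

/-! ### Escape-time lemmas -/

lemma escape_exists {x : ℝ} (hx : x ∈ M.Esc) : ∃ k, M.f^[k] x ∉ M.dom := by
  obtain ⟨hxi, hxo⟩ := hx
  by_contra h
  push_neg at h
  exact hxo ⟨hxi, h⟩

lemma e_not_dom {x : ℝ} (hx : x ∈ M.Esc) : M.f^[M.tau x] x ∉ M.dom :=
  Nat.sInf_mem (escape_exists hx)

lemma iter_dom_of_lt_tau {x : ℝ} (hx : x ∈ M.Esc) {l : ℕ} (hl : l < M.tau x) :
    M.f^[l] x ∈ M.dom := by
  by_contra h
  exact (Nat.sInf_le (show l ∈ {k | M.f^[k] x ∉ M.dom} from h)).not_gt hl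

lemma definedUpTo_le_tau {x : ℝ} (hx : x ∈ M.Esc) {p : ℕ} (hd : M.definedUpTo p x) :
    p ≤ M.tau x := by
  by_contra h
  push_neg at h
  exact e_not_dom hx (hd _ h)

lemma Rclass_no_Gamma (hM : IsMarkov M) {x : ℝ} (hx : x ∈ M.Esc) {j0 : ℕ}
    (hj0 : 1 ≤ j0 ∧ j0 < n) (hex : M.e x ∈ M.Epart j0) {z : ℝ} (hz : z ∈ M.Rclass x) :
    z ∉ M.Gamma := by
  intro hg
  obtain ⟨hzi, p, q, hdx, hdz, heq⟩ := hz
  have h1 : M.f^[q] z ∈ M.Gamma := iter_Gamma hM hg hdz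
  rw [← heq] at h1
  have hp : p ≤ M.tau x := definedUpTo_le_tau hx hdx
  have hd2 : M.definedUpTo (M.tau x - p) (M.f^[p] x) := by
    intro l hl
    rw [← Function.iterate_add_apply]
    exact iter_dom_of_lt_tau hx (by omega)
  have h2 : M.f^[M.tau x - p] (M.f^[p] x) ∈ M.Gamma := iter_Gamma hM h1 hd2
  rw [← Function.iterate_add_apply, Nat.sub_add_cancel hp] at h2
  exact M.Gamma_Epart_disj hj0.1 hj0.2 hex h2

lemma Rclass_fwd (hM : IsMarkov M) {x : ℝ} (hx : x ∈ M.Esc) {j0 : ℕ}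
    (hj0 : 1 ≤ j0 ∧ j0 < n) (hex : M.e x ∈ M.Epart j0) {z : ℝ} (hz : z ∈ M.Rclass x)
    {j : ℕ} (hj : j < n) (hzj : z ∈ M.Ipart j) :
    M.f z = M.F j z ∧ M.F j z ∈ M.Rclass x := by
  have hzG : z ∉ M.Gamma := Rclass_no_Gamma hM hx hj0 hex hz
  have hfz : M.f z = M.F j z :=
    hM.compat₁ j hj z hzj fun k hk hkj hzk =>
      hzG (M.mem_Gamma_of_mem_two hj hk (Ne.symm hkj) hzj hzk)
  refine ⟨hfz, hM.maps_into j hj ⟨z, hzj, rfl⟩, ?_⟩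
  obtain ⟨p, q, hdx, hdz, heq⟩ := hz.2
  cases q with
  | zero =>
    simp only [Function.iterate_zero_apply] at heq
    refine ⟨p + 1, 0, ?_, ?_, ?_⟩
    · intro l hl
      rcases Nat.lt_succ_iff_lt_or_eq.mp hl with h | h
      · exact hdx l h
      · subst h; rw [heq]; exact M.mem_dom hj hzj
    · intro l hl; exact absurd hl (by omega)
    · rw [Function.iterate_zero_apply, Function.iterate_succ_apply', heq, hfz]
  | succ m =>
    refine ⟨p, m, hdx, ?_, ?_⟩
    · intro l hl
      rw [← hfz, ← Function.iterate_succ_apply]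
      exact hdz (l + 1) (by omega)
    · rw [← hfz, ← Function.iterate_succ_apply]
      exact heq

lemma Rclass_back (hM : IsMarkov M) {x : ℝ} (hx : x ∈ M.Esc) {j0 : ℕ}
    (hj0 : 1 ≤ j0 ∧ j0 < n) (hex : M.e x ∈ M.Epart j0) {z : ℝ} (hz : z ∈ M.Rclass x)
    {j : ℕ} {w : ℝ} (hj : j < n) (hw : w ∈ M.Ipart j) (hFw : M.F j w = z) :
    w ∈ M.Rclass x ∧ M.f w = z := by
  have hwG : w ∉ M.Gamma := fun hg =>
    Rclass_no_Gamma hM hx hj0 hex hz (hFw ▸ Gamma_maps hM hj hw hg)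
  have hfw : M.f w = M.F j w :=
    hM.compat₁ j hj w hw fun k hk hkj hwk =>
      hwG (M.mem_Gamma_of_mem_two hj hk (Ne.symm hkj) hw hwk)
  refine ⟨⟨M.Ipart_subset_itv hj hw, ?_⟩, hfw.trans hFw⟩
  obtain ⟨p, q, hdx, hdz, heq⟩ := hz.2
  refine ⟨p, q + 1, hdx, ?_, ?_⟩
  · intro l hl
    cases l with
    | zero => simpa using M.mem_dom hj hw
    | succ m =>
      rw [Function.iterate_succ_apply, hfw, hFw]
      exact hdz m (by omega)
  · rw [Function.iterate_succ_apply, hfw, hFw]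
    exact heq

lemma Rclass_escape {x : ℝ} (hx : x ∈ M.Esc) {z : ℝ} (hz : z ∈ M.Rclass x)
    (hzd : z ∉ M.dom) : z = M.e x := by
  obtain ⟨hzi, p, q, hdx, hdz, heq⟩ := hz
  have hq : q = 0 := by
    by_contra h
    exact hzd (by simpa using hdz 0 (by omega))
  subst hq
  simp only [Function.iterate_zero_apply] at heq
  have hp1 : p ≤ M.tau x := definedUpTo_le_tau hx hdx
  have hp2 : M.tau x ≤ p := Nat.sInf_le (show M.f^[p] x ∉ M.dom by rw [heq]; exact hzd)
  have hpe : p = M.tau x := le_antisymm hp1 hp2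
  rw [← heq, hpe]
  rfl

end MarkovSystem
namespace MarkovSystem

variable {n : ℕ} {M : MarkovSystem n}

/-! ### Combinatorics of the image of a branch -/

lemma Ipart_subset_image (hM : IsMarkov M) {i j : ℕ} {z : ℝ} (hi : i < n) (hj : j < n)
    (hzj : z ∈ M.Ipart j) (hzG : z ∉ M.Gamma) (hzK : z ∈ M.F i '' M.Ipart i) :
    M.Ipart j ⊆ M.F i '' M.Ipart i := by
  obtain ⟨S, T, hS, hT, hdec⟩ := hM.markov i hi
  rw [hdec] at hzK ⊢
  rcases hzK with h | h
  · obtain ⟨k, hkS, hzk⟩ := Set.mem_iUnion₂.mp h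
    have hkn : k < n := hS hkS
    have hkj : k = j := by
      by_contra hne
      exact hzG (M.mem_Gamma_of_mem_two hkn hj hne hzk hzj)
    subst hkj
    exact fun t ht => Set.mem_union_left _ (Set.mem_iUnion₂.mpr ⟨k, hkS, ht⟩)
  · obtain ⟨k, hkT, hzk⟩ := Set.mem_iUnion₂.mp h
    obtain ⟨hk1, hkn⟩ := hT hkT
    exact absurd hzk fun h' => M.Ipart_Epart_disj hj hk1 hkn hzj h'

lemma Epart_subset_image (hM : IsMarkov M) {i j0 : ℕ} {y : ℝ} (hi : i < n)
    (hj0 : 1 ≤ j0 ∧ j0 < n) (hyE : y ∈ M.Epart j0) (hyK : y ∈ M.F i '' M.Ipart i) :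
    M.Epart j0 ⊆ M.F i '' M.Ipart i := by
  obtain ⟨S, T, hS, hT, hdec⟩ := hM.markov i hi
  rw [hdec] at hyK ⊢
  rcases hyK with h | h
  · obtain ⟨k, hkS, hyk⟩ := Set.mem_iUnion₂.mp h
    exact absurd hyE fun h' => M.Ipart_Epart_disj (hS hkS) hj0.1 hj0.2 hyk h'
  · obtain ⟨k, hkT, hyk⟩ := Set.mem_iUnion₂.mp h
    obtain ⟨hk1, hkn⟩ := hT hkT
    have hkj : k = j0 := M.Epart_eq hk1 hkn hj0.1 hj0.2 hyk hyE
    subst hkj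
    exact fun t ht => Set.mem_union_right _ (Set.mem_iUnion₂.mpr ⟨k, hkT, ht⟩)

lemma interior_preimage (hM : IsMarkov M) {i : ℕ} (hi : i < n) {y : ℝ}
    (hyK : y ∈ M.F i '' M.Ipart i)
    (hlow : ∃ t ∈ M.F i '' M.Ipart i, t < y) (hhigh : ∃ t ∈ M.F i '' M.Ipart i, y < t) :
    y ∈ M.F i '' interior (M.Ipart i) := by
  obtain ⟨u, huI, rfl⟩ := hyK
  have key : ¬(u = M.cp i ∨ u = M.cm (i + 1)) := by
    intro hu
    rcases endpoint_extreme hM hi hu with hmin | hmax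
    · obtain ⟨t, ⟨s, hs, rfl⟩, hlt⟩ := hlow
      exact absurd (hmin s hs) (not_le.mpr hlt)
    · obtain ⟨t, ⟨s, hs, rfl⟩, hlt⟩ := hhigh
      exact absurd (hmax s hs) (not_le.mpr hlt)
  push_neg at key
  refine ⟨u, ?_, rfl⟩
  rw [M.interior_Ipart]
  exact ⟨lt_of_le_of_ne huI.1 (Ne.symm key.1), lt_of_le_of_ne huI.2 key.2⟩

lemma memK_iff_trans (hM : IsMarkov M) {x : ℝ} (hx : x ∈ M.Esc) {j0 : ℕ}
    (hj0 : 1 ≤ j0 ∧ j0 < n) (hex : M.e x ∈ M.Epart j0) {i : ℕ} (hi : i < n) {z : ℝ}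
    (hz : z ∈ M.Rclass x) {j : ℕ} (hj : j < n) (hzj : z ∈ M.Ipart j) :
    z ∈ M.F i '' M.Ipart i ↔ M.trans i j := by
  have hzG : z ∉ M.Gamma := Rclass_no_Gamma hM hx hj0 hex hz
  constructor
  · intro hzK
    have hsub := Ipart_subset_image hM hi hj hzj hzG hzK
    intro y hy
    rw [M.interior_Ipart] at hy
    refine interior_preimage hM hi (hsub ⟨hy.1.le, hy.2.le⟩) ?_ ?_
    · exact ⟨M.cp j, hsub (M.Ipart_left_mem hj), hy.1⟩
    · exact ⟨M.cm (j + 1), hsub (M.Ipart_right_mem hj), hy.2⟩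
  · intro htr
    have hz' : z ∈ interior (M.Ipart j) := by
      rw [M.interior_Ipart]
      refine ⟨lt_of_le_of_ne hzj.1 fun h => hzG ?_, lt_of_le_of_ne hzj.2 fun h => hzG ?_⟩
      · rw [← h]; exact M.cp_mem_Gamma (by omega)
      · rw [h]; exact M.cm_mem_Gamma (by omega)
    exact Set.image_mono interior_subset (htr hz')

lemma ex_memK_iff_ahat (hM : IsMarkov M) {x : ℝ} (hx : x ∈ M.Esc) {j0 : ℕ}
    (hj0 : 1 ≤ j0 ∧ j0 < n) (hex : M.e x ∈ M.Epart j0) {i : ℕ} (hi : i < n) :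
    M.e x ∈ M.F i '' M.Ipart i ↔ M.ahat i j0 := by
  obtain ⟨he1, he2⟩ := hex
  constructor
  · intro hK
    have hsub := Epart_subset_image hM hi hj0 (show M.e x ∈ M.Epart j0 from ⟨he1, he2⟩) hK
    have h1 : ∃ t ∈ M.F i '' M.Ipart i, t < M.e x :=
      ⟨(M.cm j0 + M.e x) / 2, hsub ⟨by linarith, by linarith⟩, by linarith⟩
    have h2 : ∃ t ∈ M.F i '' M.Ipart i, M.e x < t :=
      ⟨(M.e x + M.cp j0) / 2, hsub ⟨by linarith, by linarith⟩, by linarith⟩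
    obtain ⟨u, huint, hFu⟩ := interior_preimage hM hi hK h1 h2
    refine ⟨u, huint, ?_⟩
    show M.F i u ∈ M.Epart j0
    rw [hFu]
    exact ⟨he1, he2⟩
  · rintro ⟨u, huint, huE⟩
    have huI : u ∈ M.Ipart i := interior_subset huint
    have hFuE : M.F i u ∈ M.Epart j0 := huE
    have hsub := Epart_subset_image hM hi hj0 hFuE (Set.mem_image_of_mem _ huI)
    exact hsub ⟨he1, he2⟩

end MarkovSystem
namespace MarkovSystem

variable {n : ℕ} {M : MarkovSystem n} {x : ℝ}

/-! ### Hilbert-space lemmas -/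

lemma dvec_apply_self (z : M.Rclass x) : (M.dvec z) z = 1 :=
  lp.single_apply_self 2 z 1

lemma dvec_apply_ne {z u : M.Rclass x} (h : u ≠ z) : (M.dvec z) u = 0 :=
  lp.single_apply_ne 2 z 1 h

lemma inner_dvec_left (z : M.Rclass x) (g : M.Hsp x) :
    (inner ℂ (M.dvec z) g : ℂ) = g z := by
  rw [MarkovSystem.dvec, lp.inner_single_left]
  simp [RCLike.inner_apply]

lemma star_coord (A : M.Hsp x →L[ℂ] M.Hsp x) (a b : M.Rclass x) :
    (star A (M.dvec a)) b = (inner ℂ (A (M.dvec b)) (M.dvec a) : ℂ) := by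
  calc (star A (M.dvec a)) b
      = (inner ℂ (M.dvec b) (star A (M.dvec a)) : ℂ) := (inner_dvec_left _ _).symm
    _ = (inner ℂ (A (M.dvec b)) (M.dvec a) : ℂ) := by
        rw [ContinuousLinearMap.star_eq_adjoint]
        exact ContinuousLinearMap.adjoint_inner_right A (M.dvec b) (M.dvec a)

lemma ext_dvec (A B : M.Hsp x →L[ℂ] M.Hsp x)
    (h : ∀ z : M.Rclass x, A (M.dvec z) = B (M.dvec z)) : A = B := by
  have hstar : ∀ u : M.Rclass x, star A (M.dvec u) = star B (M.dvec u) := by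
    intro u
    apply lp.ext
    funext v
    rw [star_coord, star_coord, h v]
  apply ContinuousLinearMap.ext
  intro g
  apply lp.ext
  funext u
  calc (A g) u
      = (inner ℂ (M.dvec u) (A g) : ℂ) := (inner_dvec_left _ _).symm
    _ = (inner ℂ ((ContinuousLinearMap.adjoint A) (M.dvec u)) g : ℂ) :=
        (ContinuousLinearMap.adjoint_inner_left A g (M.dvec u)).symm
    _ = (inner ℂ ((ContinuousLinearMap.adjoint B) (M.dvec u)) g : ℂ) := by
        rw [← ContinuousLinearMap.star_eq_adjoint, ← ContinuousLinearMap.star_eq_adjoint,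
          hstar u]
    _ = (inner ℂ (M.dvec u) (B g) : ℂ) := ContinuousLinearMap.adjoint_inner_left B g (M.dvec u)
    _ = (B g) u := inner_dvec_left _ _

lemma star_branch (hM : IsMarkov M) (hx : x ∈ M.Esc) {j0 : ℕ} (hj0 : 1 ≤ j0 ∧ j0 < n)
    (hex : M.e x ∈ M.Epart j0) {i : ℕ} (hi : i < n) {Ti : M.Hsp x →L[ℂ] M.Hsp x}
    (hTi : M.IsBranchOp x i Ti) (z : M.Rclass x) (hzI : (z : ℝ) ∈ M.Ipart i) :
    star Ti (M.dvec z) =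
      M.dvec ⟨M.F i z, (Rclass_fwd hM hx hj0 hex z.2 hi hzI).2⟩ := by
  apply lp.ext
  funext u
  rw [star_coord]
  by_cases hu : (u : ℝ) ∈ M.F i '' M.Ipart i
  · obtain ⟨w, hwI, hwF⟩ := hu
    obtain ⟨hwR, -⟩ := Rclass_back hM hx hj0 hex u.2 hi hwI hwF
    rw [hTi.1 u ⟨w, hwR⟩ hwI hwF, inner_dvec_left]
    by_cases hwz : w = (z : ℝ)
    · have h1 : (⟨w, hwR⟩ : M.Rclass x) = z := Subtype.ext hwz
      have h2 : u = (⟨M.F i z, (Rclass_fwd hM hx hj0 hex z.2 hi hzI).2⟩ : M.Rclass x) :=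
        Subtype.ext (by rw [← hwF, hwz])
      rw [h1, h2, dvec_apply_self, dvec_apply_self]
    · have h1 : (⟨w, hwR⟩ : M.Rclass x) ≠ z := fun h => hwz (congrArg Subtype.val h)
      have h2 : u ≠ (⟨M.F i z, (Rclass_fwd hM hx hj0 hex z.2 hi hzI).2⟩ : M.Rclass x) :=
        fun h => hwz (F_injOn hM hi hwI hzI (by rw [hwF]; exact congrArg Subtype.val h))
      rw [dvec_apply_ne h1, dvec_apply_ne h2]
  · rw [hTi.2 u hu, inner_zero_left]
    have h2 : u ≠ (⟨M.F i z, (Rclass_fwd hM hx hj0 hex z.2 hi hzI).2⟩ : M.Rclass x) :=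
      fun h => hu (by rw [congrArg Subtype.val h]; exact Set.mem_image_of_mem _ hzI)
    rw [dvec_apply_ne h2]

lemma star_branch_zero (hM : IsMarkov M) (hx : x ∈ M.Esc) {j0 : ℕ} (hj0 : 1 ≤ j0 ∧ j0 < n)
    (hex : M.e x ∈ M.Epart j0) {i : ℕ} (hi : i < n) {Ti : M.Hsp x →L[ℂ] M.Hsp x}
    (hTi : M.IsBranchOp x i Ti) (z : M.Rclass x) (hzI : (z : ℝ) ∉ M.Ipart i) :
    star Ti (M.dvec z) = 0 := by
  apply lp.ext
  funext u
  rw [star_coord]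
  by_cases hu : (u : ℝ) ∈ M.F i '' M.Ipart i
  · obtain ⟨w, hwI, hwF⟩ := hu
    obtain ⟨hwR, -⟩ := Rclass_back hM hx hj0 hex u.2 hi hwI hwF
    rw [hTi.1 u ⟨w, hwR⟩ hwI hwF, inner_dvec_left]
    have h1 : (⟨w, hwR⟩ : M.Rclass x) ≠ z := fun h => hzI (congrArg Subtype.val h ▸ hwI)
    rw [dvec_apply_ne h1]
    simp [lp.coeFn_zero]
  · rw [hTi.2 u hu, inner_zero_left]
    simp [lp.coeFn_zero]

end MarkovSystem
/-- For `x ∈ E_f` with escape index `ι(x) = j₀`, one has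
`T_i* T_i = ∑_j a_{ij} T_j T_j* + â_{i,ι(x)} P_{e(x)}` for every `i`. -/
theorem TstarT_decomposition {n : ℕ} (M : MarkovSystem n) (hM : IsMarkov M)
    {x : ℝ} (hx : x ∈ M.Esc) {j0 : ℕ} (hj0 : 1 ≤ j0 ∧ j0 < n)
    (hex : M.e x ∈ M.Epart j0)
    (T : ℕ → (M.Hsp x →L[ℂ] M.Hsp x)) (hT : ∀ i < n, M.IsBranchOp x i (T i))
    (Pe : M.Hsp x →L[ℂ] M.Hsp x) (hPe : M.IsEscProj x Pe) :
    ∀ i < n, star (T i) * T i =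
      (∑ j ∈ Finset.range n, if M.trans i j then T j * star (T j) else 0) +
      (if M.ahat i j0 then Pe else 0) := by
  intro i hi
  apply MarkovSystem.ext_dvec
  intro z
  -- left-hand side on a basis vector
  have hL : (star (T i) * T i) (M.dvec z) =
      if (z : ℝ) ∈ M.F i '' M.Ipart i then M.dvec z else 0 := by
    rw [ContinuousLinearMap.mul_apply]
    by_cases hzK : (z : ℝ) ∈ M.F i '' M.Ipart i
    · rw [if_pos hzK]
      obtain ⟨w, hwI, hwF⟩ := hzK
      obtain ⟨hwR, -⟩ := MarkovSystem.Rclass_back hM hx hj0 hex z.2 hi hwI hwF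
      rw [(hT i hi).1 z ⟨w, hwR⟩ hwI hwF,
        MarkovSystem.star_branch hM hx hj0 hex hi (hT i hi) ⟨w, hwR⟩ hwI]
      exact congrArg M.dvec (Subtype.ext hwF)
    · rw [if_neg hzK, (hT i hi).2 z hzK, map_zero]
  -- the summands on a basis vector
  have hR : ∀ j, j < n → (if M.trans i j then T j * star (T j) else 0) (M.dvec z)
      = if M.trans i j ∧ (z : ℝ) ∈ M.Ipart j then M.dvec z else 0 := by
    intro j hj
    by_cases htr : M.trans i j
    · by_cases hzj : (z : ℝ) ∈ M.Ipart j
      · rw [if_pos htr, if_pos ⟨htr, hzj⟩, ContinuousLinearMap.mul_apply,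
          MarkovSystem.star_branch hM hx hj0 hex hj (hT j hj) z hzj]
        exact (hT j hj).1 _ z hzj rfl
      · rw [if_pos htr, if_neg fun h => hzj h.2, ContinuousLinearMap.mul_apply,
          MarkovSystem.star_branch_zero hM hx hj0 hex hj (hT j hj) z hzj, map_zero]
    · rw [if_neg htr, if_neg fun h => htr h.1, ContinuousLinearMap.zero_apply]
  rw [hL, ContinuousLinearMap.add_apply, ContinuousLinearMap.sum_apply]
  by_cases hzdom : ∃ j, j < n ∧ (z : ℝ) ∈ M.Ipart j
  · obtain ⟨j, hj, hzj⟩ := hzdom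
    have hzG : (z : ℝ) ∉ M.Gamma := MarkovSystem.Rclass_no_Gamma hM hx hj0 hex z.2
    have hzne : (z : ℝ) ≠ M.e x := fun h =>
      M.Ipart_Epart_disj hj hj0.1 hj0.2 hzj (h ▸ hex)
    have hsum : (∑ k ∈ Finset.range n,
        (if M.trans i k then T k * star (T k) else 0) (M.dvec z))
        = if M.trans i j ∧ (z : ℝ) ∈ M.Ipart j then M.dvec z else 0 := by
      rw [Finset.sum_eq_single j]
      · exact hR j hj
      · intro k hk hkj
        rw [hR k (Finset.mem_range.mp hk)]
        have hnk : (z : ℝ) ∉ M.Ipart k := fun h =>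
          hzG (M.mem_Gamma_of_mem_two (Finset.mem_range.mp hk) hj hkj h hzj)
        rw [if_neg fun h => hnk h.2]
      · intro hj'
        exact absurd (Finset.mem_range.mpr hj) hj'
    have hPeT : (if M.ahat i j0 then Pe else 0) (M.dvec z) = 0 := by
      by_cases ha : M.ahat i j0
      · rw [if_pos ha, hPe z, if_neg hzne]
      · rw [if_neg ha, ContinuousLinearMap.zero_apply]
    rw [hsum, hPeT, add_zero]
    exact if_congr ((MarkovSystem.memK_iff_trans hM hx hj0 hex hi z.2 hj hzj).trans
      (and_iff_left hzj).symm) rfl rfl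
  · push_neg at hzdom
    have hznd : (z : ℝ) ∉ M.dom := fun h => by
      obtain ⟨j, hj, hzj⟩ := M.exists_of_mem_dom h
      exact hzdom j hj hzj
    have hze : (z : ℝ) = M.e x := MarkovSystem.Rclass_escape hx z.2 hznd
    have hsum0 : (∑ k ∈ Finset.range n,
        (if M.trans i k then T k * star (T k) else 0) (M.dvec z)) = 0 := by
      refine Finset.sum_eq_zero fun k hk => ?_
      rw [hR k (Finset.mem_range.mp hk),
        if_neg fun h => hzdom k (Finset.mem_range.mp hk) h.2]
    have hPeT : (if M.ahat i j0 then Pe else 0) (M.dvec z)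
        = if M.ahat i j0 then M.dvec z else 0 := by
      by_cases ha : M.ahat i j0
      · rw [if_pos ha, if_pos ha, hPe z, if_pos hze]
      · rw [if_neg ha, if_neg ha, ContinuousLinearMap.zero_apply]
    rw [hsum0, zero_add, hPeT]
    refine if_congr ?_ rfl rfl
    rw [hze]
    exact MarkovSystem.ex_memK_iff_ahat hM hx hj0 hex hi
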